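/- The map h/k ↦ h/(k-h) is an order-preserving bijection from the left halfsequence F^{≤1/2}(B(2m), m) onto the Farey sequence F_m. -/

import Mathlib

/-- The Farey sequence of order `m`: rationals in `[0,1]` with denominator at most `m`. -/
def Farey (m : ℕ) : Set ℚ := {q | 0 ≤ q ∧ q ≤ 1 ∧ q.den ≤ m}

/-- The Farey subsequence `F(B(2m), m)`: fractions `h/k` in lowest terms with
`0 ≤ h/k ≤ 1`, `k ≤ 2m` and `k - m ≤ h ≤ m`. -/
def FareyB (m : ℕ) : Set ℚ :=
  {q | 0 ≤ q ∧ q ≤ 1 ∧ q.den ≤ 2 * m ∧ (q.den : ℤ) - m ≤ q.num ∧ q.num ≤ m}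

/-- The left halfsequence `F^{≤1/2}(B(2m), m)`. -/
def FareyBLeft (m : ℕ) : Set ℚ := {q ∈ FareyB m | q ≤ 1/2}

/-- The right halfsequence `F^{≥1/2}(B(2m), m)`. -/
def FareyBRight (m : ℕ) : Set ℚ := {q ∈ FareyB m | 1/2 ≤ q}

lemma num_den_map (q : ℚ) (hq : 0 ≤ q) (hq1 : q < 1) :
    (q / (1 - q)).num = q.num ∧ ((q / (1 - q)).den : ℤ) = (q.den : ℤ) - q.num := by
  set a : ℤ := q.num with ha
  have hb0 : (0:ℤ) < q.den := by exact_mod_cast q.pos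
  have hb : ((q.den : ℤ) : ℚ) ≠ 0 := by exact_mod_cast hb0.ne'
  have hbq : (0:ℚ) < (q.den : ℚ) := by exact_mod_cast q.pos
  have hkey : q * (q.den : ℚ) = ((a : ℤ) : ℚ) := by
    have h := Rat.num_div_den q
    rw [div_eq_iff hbq.ne'] at h
    exact h.symm
  have hab : a < (q.den : ℤ) := by
    have h2 : ((a : ℤ) : ℚ) < ((q.den : ℤ) : ℚ) := by
      rw [← hkey]; push_cast
      nlinarith [mul_lt_mul_of_pos_right hq1 hbq]
    exact_mod_cast h2
  have hpos : (0:ℤ) < (q.den : ℤ) - a := by omega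
  have hco : IsCoprime a (q.den : ℤ) := by
    rw [Int.isCoprime_iff_gcd_eq_one]; exact q.reduced
  have hco' : Nat.Coprime a.natAbs ((q.den : ℤ) - a).natAbs := by
    have : IsCoprime a ((q.den : ℤ) + a * (-1)) := hco.add_mul_left_right (-1)
    rw [Int.isCoprime_iff_gcd_eq_one] at this
    rw [show (q.den : ℤ) + a * (-1) = q.den - a by ring] at this; exact this
  have heq : q / (1 - q) = (a : ℚ) / (((q.den : ℤ) - a : ℤ) : ℚ) := by
    have hne : (((q.den : ℤ) - a : ℤ) : ℚ) ≠ 0 := by exact_mod_cast hpos.ne'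
    have h1q : (1 : ℚ) - q ≠ 0 := by linarith
    rw [div_eq_div_iff h1q hne]
    push_cast
    linear_combination hkey
  constructor
  · rw [heq]; exact Rat.num_div_eq_of_coprime hpos hco'
  · rw [heq]; exact Rat.den_div_eq_of_coprime hpos hco'

lemma num_den_inv (p : ℚ) (hp : 0 ≤ p) :
    (p / (1 + p)).num = p.num ∧ ((p / (1 + p)).den : ℤ) = (p.den : ℤ) + p.num := by
  set a : ℤ := p.num with ha
  have ha0 : 0 ≤ a := Rat.num_nonneg.mpr hp
  have hb0 : (0:ℤ) < p.den := by exact_mod_cast p.pos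
  have hbq : (0:ℚ) < (p.den : ℚ) := by exact_mod_cast p.pos
  have hkey : p * (p.den : ℚ) = ((a : ℤ) : ℚ) := by
    have h := Rat.num_div_den p
    rw [div_eq_iff hbq.ne'] at h
    exact h.symm
  have hpos : (0:ℤ) < (p.den : ℤ) + a := by omega
  have hco : IsCoprime a (p.den : ℤ) := by
    rw [Int.isCoprime_iff_gcd_eq_one]; exact p.reduced
  have hco' : Nat.Coprime a.natAbs ((p.den : ℤ) + a).natAbs := by
    have : IsCoprime a ((p.den : ℤ) + a * 1) := hco.add_mul_left_right 1
    rw [Int.isCoprime_iff_gcd_eq_one] at this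
    rw [mul_one] at this; exact this
  have heq : p / (1 + p) = (a : ℚ) / (((p.den : ℤ) + a : ℤ) : ℚ) := by
    have hne : (((p.den : ℤ) + a : ℤ) : ℚ) ≠ 0 := by exact_mod_cast hpos.ne'
    have h1p : (1 : ℚ) + p ≠ 0 := by linarith
    rw [div_eq_div_iff h1p hne]
    push_cast
    linear_combination hkey
  constructor
  · rw [heq]; exact Rat.num_div_eq_of_coprime hpos hco'
  · rw [heq]; exact Rat.den_div_eq_of_coprime hpos hco'

lemma num_le_den (p : ℚ) (hp : p ≤ 1) : p.num ≤ (p.den : ℤ) := by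
  have hbq : (0:ℚ) < (p.den : ℚ) := by exact_mod_cast p.pos
  have h := Rat.num_div_den p
  rw [div_eq_iff hbq.ne'] at h
  have h2 : ((p.num : ℤ) : ℚ) ≤ ((p.den : ℤ) : ℚ) := by
    push_cast; nlinarith
  exact_mod_cast h2

theorem fareyBLeft_to_farey (m : ℕ) (hm : 1 < m) :
    Set.BijOn (fun q : ℚ => q / (1 - q)) (FareyBLeft m) (Farey m) ∧
      StrictMonoOn (fun q : ℚ => q / (1 - q)) (FareyBLeft m) := by
  have hmono : StrictMonoOn (fun q : ℚ => q / (1 - q)) (FareyBLeft m) := by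
    intro x hx y hy hxy
    obtain ⟨_, hx2⟩ := hx
    obtain ⟨_, hy2⟩ := hy
    have hx2' : x ≤ 1/2 := hx2
    have hy2' : y ≤ 1/2 := hy2
    have hx1 : (0:ℚ) < 1 - x := by linarith
    have hy1 : (0:ℚ) < 1 - y := by linarith
    simp only
    rw [div_lt_div_iff₀ hx1 hy1]
    nlinarith
  refine ⟨⟨?_, hmono.injOn, ?_⟩, hmono⟩
  · -- MapsTo
    rintro q ⟨⟨h0, h1, hden, hl, hr⟩, hhalf⟩
    have hhalf' : q ≤ 1/2 := hhalf
    have hq1 : q < 1 := by linarith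
    have h1q : (0:ℚ) < 1 - q := by linarith
    obtain ⟨hnum, hden'⟩ := num_den_map q h0 hq1
    refine ⟨div_nonneg h0 h1q.le, ?_, ?_⟩
    · rw [div_le_one h1q]; linarith
    · have : ((q / (1 - q)).den : ℤ) ≤ m := by omega
      exact_mod_cast this
  · -- SurjOn
    rintro p ⟨h0, h1, hden⟩
    have h1p : (0:ℚ) < 1 + p := by linarith
    have hnum0 : 0 ≤ p.num := Rat.num_nonneg.mpr h0
    have hnumden : p.num ≤ (p.den : ℤ) := num_le_den p h1
    have hdenm : (p.den : ℤ) ≤ m := by exact_mod_cast hden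
    obtain ⟨hnum, hden'⟩ := num_den_inv p h0
    set q : ℚ := p / (1 + p) with hqdef
    have hq2 : q ≤ 1/2 := by
      rw [hqdef, div_le_div_iff₀ h1p (by norm_num : (0:ℚ) < 2)]
      linarith
    have hq0 : 0 ≤ q := div_nonneg h0 h1p.le
    refine ⟨q, ⟨⟨hq0, by linarith, ?_, ?_, ?_⟩, hq2⟩, ?_⟩
    · have : (q.den : ℤ) ≤ 2 * m := by omega
      exact_mod_cast this
    · omega
    · omega
    · show q / (1 - q) = p
      rw [hqdef]
      field_simp
      ring
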